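/- Let r = 0.8 and c = 1/(8^r - 6^r). If x, y, z are nonnegative reals with x ≥ 8.956·z and y ≥ 1.036·z, then x^r + y^r ≥ (x + y + z)^r. -/

import Mathlib

/-- Submodularity of `x ↦ x ^ r` for `0 ≤ r ≤ 1`. -/
lemma rpow_submod (r : ℝ) (hr0 : 0 ≤ r) (hr1 : r ≤ 1) {a b t : ℝ}
    (ha : 0 ≤ a) (hab : a ≤ b) (ht : 0 ≤ t) :
    (b + t) ^ r + a ^ r ≤ (a + t) ^ r + b ^ r := by
  have hconc := Real.concaveOn_rpow hr0 hr1
  rcases eq_or_lt_of_le (by linarith : (0:ℝ) ≤ (b - a) + t) with h | h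
  · have ht0 : t = 0 := by linarith [sub_nonneg.2 hab]
    have hab0 : a = b := by linarith
    simp [ht0, hab0]
  · set s : ℝ := (b - a) + t with hs
    set l : ℝ := (b - a) / s with hl
    set m : ℝ := t / s with hm
    have hl0 : 0 ≤ l := div_nonneg (by linarith) h.le
    have hm0 : 0 ≤ m := div_nonneg ht h.le
    have hlm : l + m = 1 := by
      rw [hl, hm, ← add_div, div_eq_one_iff_eq h.ne']
    have hb0 : 0 ≤ b := le_trans ha hab
    have hmem1 : a ∈ Set.Ici (0:ℝ) := ha
    have hmem2 : b + t ∈ Set.Ici (0:ℝ) := by simp; linarith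
    have e1 : l • a + m • (b + t) = a + t := by
      rw [hl, hm, smul_eq_mul, smul_eq_mul, div_mul_eq_mul_div, div_mul_eq_mul_div, ← add_div, div_eq_iff h.ne']; rw [hs]; ring
    have e2 : m • a + l • (b + t) = b := by
      rw [hl, hm, smul_eq_mul, smul_eq_mul, div_mul_eq_mul_div, div_mul_eq_mul_div, ← add_div, div_eq_iff h.ne']; rw [hs]; ring
    have h1 := hconc.2 hmem1 hmem2 hl0 hm0 hlm
    have h2 := hconc.2 hmem1 hmem2 hm0 hl0 (by linarith)
    rw [e1] at h1
    rw [e2] at h2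
    simp only [smul_eq_mul] at h1 h2
    have key := add_le_add h1 h2
    have expand : l * a ^ r + m * (b + t) ^ r + (m * a ^ r + l * (b + t) ^ r)
        = (l + m) * (a ^ r + (b + t) ^ r) := by ring
    rw [expand, hlm, one_mul] at key
    linarith

/-- The key numeric inequality. -/
lemma key_num : (10.992 : ℝ) ^ (0.8 : ℝ) ≤ (8.956 : ℝ) ^ (0.8 : ℝ) + (1.036 : ℝ) ^ (0.8 : ℝ) := by
  have h5 : (0:ℝ) < 1/5 := by norm_num
  have hA : (5.77685 : ℝ) ≤ (8.956 : ℝ) ^ (0.8 : ℝ) := by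
    have h1 : (5.77685 : ℝ) = ((5.77685 : ℝ) ^ (5:ℕ)) ^ ((1:ℝ)/5) := by
      rw [← Real.rpow_natCast (5.77685 : ℝ) 5, ← Real.rpow_mul (by norm_num)]
      norm_num
    have h2 : (8.956 : ℝ) ^ (0.8 : ℝ) = ((8.956 : ℝ) ^ (4:ℕ)) ^ ((1:ℝ)/5) := by
      rw [← Real.rpow_natCast (8.956 : ℝ) 4, ← Real.rpow_mul (by norm_num)]
      norm_num
    rw [h1, h2]
    apply Real.rpow_le_rpow (by positivity) _ (by norm_num)
    norm_num
  have hB : (1.02869 : ℝ) ≤ (1.036 : ℝ) ^ (0.8 : ℝ) := by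
    have h1 : (1.02869 : ℝ) = ((1.02869 : ℝ) ^ (5:ℕ)) ^ ((1:ℝ)/5) := by
      rw [← Real.rpow_natCast (1.02869 : ℝ) 5, ← Real.rpow_mul (by norm_num)]
      norm_num
    have h2 : (1.036 : ℝ) ^ (0.8 : ℝ) = ((1.036 : ℝ) ^ (4:ℕ)) ^ ((1:ℝ)/5) := by
      rw [← Real.rpow_natCast (1.036 : ℝ) 4, ← Real.rpow_mul (by norm_num)]
      norm_num
    rw [h1, h2]
    apply Real.rpow_le_rpow (by positivity) _ (by norm_num)
    norm_num
  have hC : (10.992 : ℝ) ^ (0.8 : ℝ) ≤ 6.80554 := by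
    have h1 : (6.80554 : ℝ) = ((6.80554 : ℝ) ^ (5:ℕ)) ^ ((1:ℝ)/5) := by
      rw [← Real.rpow_natCast (6.80554 : ℝ) 5, ← Real.rpow_mul (by norm_num)]
      norm_num
    have h2 : (10.992 : ℝ) ^ (0.8 : ℝ) = ((10.992 : ℝ) ^ (4:ℕ)) ^ ((1:ℝ)/5) := by
      rw [← Real.rpow_natCast (10.992 : ℝ) 4, ← Real.rpow_mul (by norm_num)]
      norm_num
    rw [h1, h2]
    apply Real.rpow_le_rpow (by positivity) _ (by norm_num)
    norm_num
  linarith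

theorem stmt_1 (r : ℝ) (hr : r = 0.8) (x y z : ℝ)
    (hx0 : 0 ≤ x) (hy0 : 0 ≤ y) (hz0 : 0 ≤ z)
    (hx : x ≥ 8.956 * z) (hy : y ≥ 1.036 * z) :
    x ^ r + y ^ r ≥ (x + y + z) ^ r := by
  subst hr
  have hr0 : (0:ℝ) ≤ 0.8 := by norm_num
  have hr1 : (0.8:ℝ) ≤ 1 := by norm_num
  -- step 1: decrease y to 1.036 z
  have h1 : (y + (x + z)) ^ (0.8:ℝ) + (1.036 * z) ^ (0.8:ℝ) ≤
      (1.036 * z + (x + z)) ^ (0.8:ℝ) + y ^ (0.8:ℝ) :=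
    rpow_submod 0.8 hr0 hr1 (by positivity) hy (by linarith)
  -- step 2: decrease x to 8.956 z
  have h2 : (x + 2.036 * z) ^ (0.8:ℝ) + (8.956 * z) ^ (0.8:ℝ) ≤
      (8.956 * z + 2.036 * z) ^ (0.8:ℝ) + x ^ (0.8:ℝ) :=
    rpow_submod 0.8 hr0 hr1 (by positivity) hx (by linarith)
  have e1 : (1.036 * z + (x + z)) = x + 2.036 * z := by ring
  have e2 : (8.956 * z + 2.036 * z) = 10.992 * z := by ring
  rw [e1] at h1
  rw [e2] at h2
  -- key numeric inequality scaled by z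
  have hmul : ∀ c : ℝ, 0 ≤ c → (c * z) ^ (0.8:ℝ) = c ^ (0.8:ℝ) * z ^ (0.8:ℝ) := fun c hc =>
    Real.mul_rpow hc hz0
  have hkey : (10.992 * z) ^ (0.8:ℝ) ≤ (8.956 * z) ^ (0.8:ℝ) + (1.036 * z) ^ (0.8:ℝ) := by
    rw [hmul 10.992 (by norm_num), hmul 8.956 (by norm_num), hmul 1.036 (by norm_num)]
    have hz' : (0:ℝ) ≤ z ^ (0.8:ℝ) := Real.rpow_nonneg hz0 _
    nlinarith [key_num]
  have e3 : y + (x + z) = x + y + z := by ring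
  rw [e3] at h1
  linarith
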